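/- Let ψ be a decomposable PROB and c a conjunction node with children c_1,...,c_j having pairwise disjoint variable sets. Then the satisfying assignments of the formula at c over vars(c_1) ∪ ... ∪ vars(c_j) are exactly the combinations of independently chosen satisfying assignments of each child, and hence the model count at c is the product of the children's model counts. -/

import Mathlib

/-- A PROB (probabilistic OBDD[∧]): a DAG (here unfolded to a tree) with true/false
leaves, conjunction nodes, and decision nodes carrying a variable and the hi/lo branch
parameters. -/
inductive Prob (α : Type) : Type
  | tru : Prob α
  | fls : Prob α
  | conj : List (Prob α) → Prob α
  | dec : α → ℝ → ℝ → Prob α → Prob α → Prob α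

namespace Prob

variable {α : Type}

/-- Evaluation of the Boolean formula represented by a PROB under an assignment. -/
def eval : Prob α → (α → Bool) → Bool
  | .tru, _ => true
  | .fls, _ => false
  | .conj cs, τ => cs.attach.all (fun c => eval c.1 τ)
  | .dec v _ _ hi lo, τ => if τ v then eval hi τ else eval lo τ
  decreasing_by all_goals first
    | (have := List.sizeOf_lt_of_mem c.2
       simp only [Prob.conj.sizeOf_spec]
       omega)
    | decreasing_tactic

/-- The set of variables mentioned by a PROB. -/
def vars [DecidableEq α] : Prob α → Finset α
  | .tru => ∅
  | .fls => ∅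
  | .conj cs => (cs.attach.map (fun c => vars c.1)).foldr (· ∪ ·) ∅
  | .dec v _ _ hi lo => insert v (vars hi ∪ vars lo)
  decreasing_by all_goals first
    | (have := List.sizeOf_lt_of_mem c.2
       simp only [Prob.conj.sizeOf_spec]
       omega)
    | decreasing_tactic

/-- Bottom-up weighted pass: `γ(⊤) = 1`, `γ(⊥) = 0`, `γ` of a conjunction node is the
product of the children's values, and `γ(n) = θ_lo(n)·γ(lo(n)) + θ_hi(n)·γ(hi(n))` at a
decision node `n`. -/
def gamma : Prob α → ℝ
  | .tru => 1
  | .fls => 0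
  | .conj cs => (cs.attach.map (fun c => gamma c.1)).prod
  | .dec _ θh θl hi lo => θl * gamma lo + θh * gamma hi
  decreasing_by all_goals first
    | (have := List.sizeOf_lt_of_mem c.2
       simp only [Prob.conj.sizeOf_spec]
       omega)
    | decreasing_tactic

/-- The weight of an assignment: the product, over decision nodes on the traversal
`Rep_ψ(τ)`, of the branch parameter of the branch followed by `τ`. -/
def weight : Prob α → (α → Bool) → ℝ
  | .tru, _ => 1
  | .fls, _ => 1
  | .conj cs, τ => (cs.attach.map (fun c => weight c.1 τ)).prod
  | .dec v θh θl hi lo, τ => if τ v then θh * weight hi τ else θl * weight lo τ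
  decreasing_by all_goals first
    | (have := List.sizeOf_lt_of_mem c.2
       simp only [Prob.conj.sizeOf_spec]
       omega)
    | decreasing_tactic

/-- All branch parameters are strictly positive and sum to 1 at every decision node. -/
def ValidParams : Prob α → Prop
  | .tru => True
  | .fls => True
  | .conj cs => ∀ c ∈ cs.attach, ValidParams c.1
  | .dec _ θh θl hi lo => 0 < θh ∧ 0 < θl ∧ θh + θl = 1 ∧ ValidParams hi ∧ ValidParams lo
  decreasing_by all_goals first
    | (have := List.sizeOf_lt_of_mem c.2
       simp only [Prob.conj.sizeOf_spec]
       omega)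
    | decreasing_tactic

/-- Smoothness: at every decision node, the hi and lo branches mention the same
variables. -/
def Smooth [DecidableEq α] : Prob α → Prop
  | .conj cs => ∀ c ∈ cs.attach, Smooth c.1
  | .dec _ _ _ hi lo => vars hi = vars lo ∧ Smooth hi ∧ Smooth lo
  | _ => True
  decreasing_by all_goals first
    | (have := List.sizeOf_lt_of_mem c.2
       simp only [Prob.conj.sizeOf_spec]
       omega)
    | decreasing_tactic

/-- Decomposability: at every conjunction node, the children have pairwise disjoint
variable sets. -/
def Decomposable [DecidableEq α] : Prob α → Prop
  | .conj cs => (∀ c ∈ cs.attach, Decomposable c.1) ∧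
      cs.Pairwise (fun c d => Disjoint (vars c) (vars d))
  | .dec _ _ _ hi lo => Decomposable hi ∧ Decomposable lo
  | _ => True
  decreasing_by all_goals first
    | (have := List.sizeOf_lt_of_mem c.2
       simp only [Prob.conj.sizeOf_spec]
       omega)
    | decreasing_tactic

end Prob

open Prob

namespace Prob

theorem eval_conj' (cs : List (Prob α)) (τ : α → Bool) :
    eval (Prob.conj cs) τ = cs.all (fun c => eval c τ) := by
  simp only [eval]
  rw [Bool.eq_iff_iff]; simp [List.all_eq_true]

theorem mem_foldr_union' [DecidableEq α] {l : List (Finset α)} {x : α} :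
    x ∈ l.foldr (· ∪ ·) ∅ ↔ ∃ s ∈ l, x ∈ s := by
  induction l with
  | nil => simp
  | cons a l ih => simp [ih]

theorem mem_vars_conj' [DecidableEq α] {cs : List (Prob α)} {v : α} :
    v ∈ vars (Prob.conj cs) ↔ ∃ c ∈ cs, v ∈ vars c := by
  simp only [vars]
  simp [mem_foldr_union']

theorem eval_congr' [DecidableEq α] :
    ∀ (p : Prob α) (τ τ' : α → Bool), (∀ v ∈ vars p, τ v = τ' v) → eval p τ = eval p τ'
  | .tru, _, _, _ => by simp only [eval]
  | .fls, _, _, _ => by simp only [eval]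
  | .conj cs, τ, τ', h => by
      rw [eval_conj', eval_conj', Bool.eq_iff_iff]
      simp only [List.all_eq_true]
      constructor <;> intro H c hc
      · rw [← eval_congr' c τ τ' (fun v hv => h v (mem_vars_conj'.2 ⟨c, hc, hv⟩))]; exact H c hc
      · rw [eval_congr' c τ τ' (fun v hv => h v (mem_vars_conj'.2 ⟨c, hc, hv⟩))]; exact H c hc
  | .dec v θh θl hi lo, τ, τ', h => by
      have hv : τ v = τ' v := h v (by simp [vars])
      simp only [eval]
      rw [hv]
      by_cases hb : τ' v = true
      · simp only [hb, if_true]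
        exact eval_congr' hi τ τ' (fun w hw => h w (by simp [vars, hw]))
      · simp only [Bool.not_eq_true] at hb
        simp only [hb, if_false]
        exact eval_congr' lo τ τ' (fun w hw => h w (by simp [vars, hw]))
  decreasing_by all_goals first
    | (have := List.sizeOf_lt_of_mem hc
       simp only [Prob.conj.sizeOf_spec]
       omega)
    | decreasing_tactic

end Prob

open Prob in
theorem count_mul_count {α : Type} [Fintype α] [DecidableEq α]
    (f g : (α → Bool) → Bool) (S : Finset α)
    (hf : ∀ τ τ' : α → Bool, (∀ v ∈ S, τ v = τ' v) → f τ = f τ')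
    (hg : ∀ τ τ' : α → Bool, (∀ v ∉ S, τ v = τ' v) → g τ = g τ') :
    (Finset.univ.filter fun τ : α → Bool => f τ = true).card
      * (Finset.univ.filter fun τ : α → Bool => g τ = true).card
      = (Finset.univ.filter fun τ : α → Bool => (f τ && g τ) = true).card
        * 2 ^ Fintype.card α := by
  classical
  set m : (α → Bool) → (α → Bool) → (α → Bool) :=
    fun τ₁ τ₂ v => if v ∈ S then τ₁ v else τ₂ v with hm
  have hmem1 : ∀ τ₁ τ₂ : α → Bool, ∀ v ∈ S, m τ₁ τ₂ v = τ₁ v := by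
    intro τ₁ τ₂ v hv; simp [hm, hv]
  have hmem2 : ∀ τ₁ τ₂ : α → Bool, ∀ v ∉ S, m τ₁ τ₂ v = τ₂ v := by
    intro τ₁ τ₂ v hv; simp [hm, hv]
  have key : ((Finset.univ.filter fun τ : α → Bool => f τ = true) ×ˢ
      (Finset.univ.filter fun τ : α → Bool => g τ = true)).card =
      ((Finset.univ.filter fun τ : α → Bool => (f τ && g τ) = true) ×ˢ
      (Finset.univ : Finset (α → Bool))).card := by
    apply Finset.card_bij' (fun p _ => (m p.1 p.2, m p.2 p.1)) (fun p _ => (m p.1 p.2, m p.2 p.1))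
    · intro p hp
      simp only [Finset.mem_product, Finset.mem_filter, Finset.mem_univ, true_and] at hp ⊢
      rw [hf (m p.1 p.2) p.1 (hmem1 p.1 p.2), hg (m p.1 p.2) p.2 (hmem2 p.1 p.2)]
      simp [hp.1, hp.2]
    · intro p hp
      simp only [Finset.mem_product, Finset.mem_filter, Finset.mem_univ, true_and,
        Bool.and_eq_true] at hp ⊢
      constructor
      · rw [hf (m p.1 p.2) p.1 (hmem1 p.1 p.2)]; exact hp.1.1
      · rw [hg (m p.2 p.1) p.1 (fun v hv => hmem2 p.2 p.1 v hv)]; exact hp.1.2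
    · intro p _
      ext v <;> · simp only [hm]; by_cases hv : v ∈ S <;> simp [hv]
    · intro p _
      ext v <;> · simp only [hm]; by_cases hv : v ∈ S <;> simp [hv]
  rw [Finset.card_product, Finset.card_product] at key
  rw [key, Finset.card_univ, Fintype.card_fun, Fintype.card_bool]


open Prob in
theorem prod_count_aux {α : Type} [Fintype α] [DecidableEq α] :
    ∀ (rest : List (Prob α)) (c : Prob α),
    (c :: rest).Pairwise (fun c d => Disjoint (vars c) (vars d)) →
    ((c :: rest).map fun c => (Finset.univ.filter fun τ : α → Bool => eval c τ = true).card).prod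
      = (Finset.univ.filter fun τ : α → Bool => eval (Prob.conj (c :: rest)) τ = true).card
        * (2 ^ Fintype.card α) ^ ((c :: rest).length - 1) := by
  intro rest
  induction rest with
  | nil =>
      intro c _
      have : ∀ τ : α → Bool, eval (Prob.conj [c]) τ = eval c τ := by
        intro τ; rw [eval_conj']; simp
      simp [this]
  | cons c' rest' ih =>
      intro c hdisj
      have hd' : (c' :: rest').Pairwise (fun c d => Disjoint (vars c) (vars d)) :=
        hdisj.of_cons
      have hhead : ∀ d ∈ c' :: rest', Disjoint (vars c) (vars d) :=
        (List.pairwise_cons.mp hdisj).1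
      have key := count_mul_count (eval c) (eval (Prob.conj (c' :: rest'))) (vars c)
        (fun τ τ' h => eval_congr' c τ τ' h)
        (by
          intro τ τ' h
          apply eval_congr'
          intro v hv
          apply h
          intro hvS
          obtain ⟨d, hd, hvd⟩ := mem_vars_conj'.mp hv
          exact (Finset.disjoint_left.mp (hhead d hd)) hvS hvd)
      have hsplit : ∀ τ : α → Bool,
          (eval c τ && eval (Prob.conj (c' :: rest')) τ) = eval (Prob.conj (c :: c' :: rest')) τ := by
        intro τ; rw [eval_conj', eval_conj']; simp [List.all_cons]
      simp only [hsplit] at key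
      rw [List.map_cons, List.prod_cons, ih c' hd', ← Nat.mul_assoc, key]
      simp only [List.length_cons]
      rw [Nat.mul_assoc, ← pow_succ']
      rfl

/-- At a decomposable conjunction node with children `c₁,…,c_j` having pairwise
disjoint variable sets: an assignment satisfies the node iff it satisfies every child;
satisfying assignments of the children can be combined independently; and the model
counts multiply (counting over all assignments of `α`, each of the `j` child counts
carries a factor `2^{|α| − |vars cᵢ|}`, which yields the stated identity). -/
theorem conjunction_node_decomposable {α : Type} [Fintype α] [DecidableEq α]
    (cs : List (Prob α)) (hne : cs ≠ [])
    (hdisj : cs.Pairwise fun c d => Disjoint (vars c) (vars d)) :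
    (∀ τ, eval (Prob.conj cs) τ = true ↔ ∀ c ∈ cs, eval c τ = true) ∧
    (∀ σ : Prob α → (α → Bool), (∀ c ∈ cs, eval c (σ c) = true) →
      ∃ τ, eval (Prob.conj cs) τ = true ∧ ∀ c ∈ cs, ∀ v ∈ vars c, τ v = σ c v) ∧
    (cs.map fun c => (Finset.univ.filter fun τ : α → Bool => eval c τ = true).card).prod
      = (Finset.univ.filter fun τ : α → Bool => eval (Prob.conj cs) τ = true).card
        * (2 ^ Fintype.card α) ^ (cs.length - 1) := by
  classical
  have hfilt : ∀ τ, eval (Prob.conj cs) τ = true ↔ ∀ c ∈ cs, eval c τ = true := by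
    intro τ; rw [eval_conj']; simp [List.all_eq_true]
  refine ⟨hfilt, ?_, ?_⟩
  · intro σ hσ
    set τ : α → Bool := fun v =>
      match cs.find? (fun c => decide (v ∈ vars c)) with
      | some c => σ c v
      | none => false with hτ
    have hagree : ∀ c ∈ cs, ∀ v ∈ vars c, τ v = σ c v := by
      intro c hc v hv
      cases hfind : cs.find? (fun c => decide (v ∈ vars c)) with
      | none =>
          exact absurd (by simpa using List.find?_eq_none.mp hfind c hc) (by simp [hv])
      | some c' =>
          have hc' : c' ∈ cs := List.mem_of_find?_eq_some hfind
          have hvc' : v ∈ vars c' := by simpa using List.find?_some hfind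
          have hcc : c' = c := by
            by_contra hne'
            have hsym : Symmetric (fun c d : Prob α => Disjoint (vars c) (vars d)) :=
              fun _ _ h => h.symm
            haveI : Std.Symm (fun c d : Prob α => Disjoint (vars c) (vars d)) := ⟨fun _ _ h => hsym h⟩
            exact (Finset.disjoint_left.mp (hdisj.forall hc' hc hne')) hvc' hv
          subst hcc
          simp [hτ, hfind]
    refine ⟨τ, ?_, hagree⟩
    rw [hfilt]
    intro c hc
    rw [eval_congr' c τ (σ c) (hagree c hc)]
    exact hσ c hc
  · match cs, hne with
    | c :: rest, _ => exact prod_count_aux rest c hdisj
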